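/- There exist absolute constants C₁ > 0 and C₂ > 0 such that for every integer n ≥ 1 and every real β ≥ −1/2, (1/2)·(1 − C₁/(n+2β+3)) ≤ A_{n,β}/ω_n ≤ (1/2)·(1 + C₂·ln((n+1)(n+2β+2))/(n+2β+1)), where ω_n = n·vol_n(Bₙ). -/

import Mathlib

open MeasureTheory Metric

/-- The normalization constant `c_{m,β} = Γ(m/2+β+1)/(π^{m/2} Γ(β+1))` of the
beta distribution on the unit ball of `ℝ^m`. -/
noncomputable def betaConst (m : ℕ) (β : ℝ) : ℝ :=
  Real.Gamma ((m : ℝ) / 2 + β + 1) / (Real.pi ^ ((m : ℝ) / 2) * Real.Gamma (β + 1))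

/-- The constant `d_{n,β} = (n+2β+1)/c_{1,β+(n−1)/2}`. -/
noncomputable def dConst (n : ℕ) (β : ℝ) : ℝ :=
  ((n : ℝ) + 2 * β + 1) / betaConst 1 (β + ((n : ℝ) - 1) / 2)

/-- The surface area `ω_n = n·vol_n(Bₙ)` of the unit sphere `S^{n-1}`. -/
noncomputable def omegaN (n : ℕ) : ℝ :=
  (n : ℝ) * (volume (closedBall (0 : EuclideanSpace ℝ (Fin n)) 1)).toReal

/-- The constant `A_{n,β}` in Affentranger's asymptotic formula. -/
noncomputable def Aconst (n : ℕ) (β : ℝ) : ℝ :=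
  (omegaN n / 2) * (((n : ℝ) + 2 * β + 1) / ((n : ℝ) + 2 * β + 3)) *
    (Real.Gamma ((n : ℝ) + 1 + 2 / ((n : ℝ) + 2 * β + 1)) / Real.Gamma ((n : ℝ) + 1)) *
    dConst n β ^ ((2 : ℝ) / ((n : ℝ) + 2 * β + 1))


lemma sqrt_le_of_one_le {a : ℝ} (ha : 1 ≤ a) : Real.sqrt a ≤ a := by
  nlinarith [Real.sq_sqrt (by linarith : (0:ℝ) ≤ a), Real.sqrt_nonneg a,
    Real.one_le_sqrt.2 ha]

/-- log-convexity midpoint: Γ(x+1/2) ≤ Γ(x)·√x for x > 0. -/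
lemma gamma_add_half_le {x : ℝ} (hx : 0 < x) :
    Real.Gamma (x + 1/2) ≤ Real.Gamma x * Real.sqrt x := by
  have h := Real.convexOn_log_Gamma.2 (Set.mem_Ioi.2 hx)
    (Set.mem_Ioi.2 (by linarith : (0:ℝ) < x + 1))
    (by norm_num : (0:ℝ) ≤ (1/2:ℝ)) (by norm_num : (0:ℝ) ≤ (1/2:ℝ)) (by norm_num)
  have hmid : (1/2 : ℝ) • x + (1/2 : ℝ) • (x+1) = x + 1/2 := by
    simp only [smul_eq_mul]; ring
  rw [hmid] at h
  simp only [Function.comp_apply, smul_eq_mul] at h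
  have hg1 : Real.Gamma (x + 1) = x * Real.Gamma x := Real.Gamma_add_one hx.ne'
  have hgx : 0 < Real.Gamma x := Real.Gamma_pos_of_pos hx
  have hgh : 0 < Real.Gamma (x + 1/2) := Real.Gamma_pos_of_pos (by linarith)
  have hlog : Real.log (Real.Gamma (x + 1/2)) ≤
      Real.log (Real.Gamma x) + Real.log x / 2 := by
    rw [hg1, Real.log_mul hx.ne' hgx.ne'] at h
    linarith
  have hsx : 0 < Real.sqrt x := Real.sqrt_pos.2 hx
  have : Real.log (Real.Gamma x * Real.sqrt x)
      = Real.log (Real.Gamma x) + Real.log x / 2 := by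
    rw [Real.log_mul hgx.ne' hsx.ne', Real.log_sqrt hx.le]
  calc Real.Gamma (x + 1/2) = Real.exp (Real.log (Real.Gamma (x + 1/2))) :=
        (Real.exp_log hgh).symm
    _ ≤ Real.exp (Real.log (Real.Gamma x * Real.sqrt x)) := by
        rw [this]; exact Real.exp_le_exp.2 hlog
    _ = Real.Gamma x * Real.sqrt x := Real.exp_log (by positivity)

/-- Γ is increasing past 2 (crude). -/
lemma gamma_le_gamma_add {x ε : ℝ} (hx : 2 ≤ x) (hε : 0 < ε) :
    Real.Gamma x ≤ Real.Gamma (x + ε) := by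
  have h := Real.convexOn_log_Gamma.slope_mono_adjacent
    (Set.mem_Ioi.2 (by linarith : (0:ℝ) < x - 1))
    (Set.mem_Ioi.2 (by linarith : (0:ℝ) < x + ε))
    (by linarith : x - 1 < x) (by linarith : x < x + ε)
  simp only [Function.comp_apply] at h
  have hg1 : Real.Gamma x = (x-1) * Real.Gamma (x-1) := by
    have := Real.Gamma_add_one (by linarith : x - 1 ≠ 0)
    rw [show x - 1 + 1 = x by ring] at this; exact this
  have hgx1 : 0 < Real.Gamma (x-1) := Real.Gamma_pos_of_pos (by linarith)
  have hslope : Real.log (Real.Gamma x) - Real.log (Real.Gamma (x-1)) = Real.log (x-1) := by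
    rw [hg1, Real.log_mul (by linarith) hgx1.ne']; ring
  rw [show x - (x-1) = 1 by ring] at h
  have hlx : 0 ≤ Real.log (x-1) := Real.log_nonneg (by linarith)
  have : Real.log (Real.Gamma x) ≤ Real.log (Real.Gamma (x + ε)) := by
    have h' : 0 ≤ (Real.log (Real.Gamma (x+ε)) - Real.log (Real.Gamma x)) / (x + ε - x) := by
      calc (0:ℝ) ≤ Real.log (x-1) := hlx
        _ = (Real.log (Real.Gamma x) - Real.log (Real.Gamma (x-1))) / 1 := by
            rw [hslope]; ring
        _ ≤ _ := h
    rw [show x + ε - x = ε by ring] at h'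
    rcases div_nonneg_iff.mp h' with ⟨ha, _⟩ | ⟨_, hε'⟩
    · linarith
    · linarith
  have hgx : 0 < Real.Gamma x := Real.Gamma_pos_of_pos (by linarith)
  calc Real.Gamma x = Real.exp (Real.log (Real.Gamma x)) := (Real.exp_log hgx).symm
    _ ≤ Real.exp (Real.log (Real.Gamma (x+ε))) := Real.exp_le_exp.2 this
    _ = Real.Gamma (x+ε) := Real.exp_log (Real.Gamma_pos_of_pos (by linarith))

/-- secant bound: log Γ(x+ε) ≤ log Γ(x) + (ε/2)·log(x(x+1)) for x ≥ 2, 0 < ε ≤ 2. -/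
lemma log_gamma_add_le {x ε : ℝ} (hx : 2 ≤ x) (hε : 0 < ε) (hε2 : ε ≤ 2) :
    Real.log (Real.Gamma (x + ε)) ≤ Real.log (Real.Gamma x) + (ε/2) * Real.log (x*(x+1)) := by
  have h := Real.convexOn_log_Gamma.secant_mono
    (Set.mem_Ioi.2 (by linarith : (0:ℝ) < x))
    (Set.mem_Ioi.2 (by linarith : (0:ℝ) < x + ε))
    (Set.mem_Ioi.2 (by linarith : (0:ℝ) < x + 2))
    (by intro hc; nlinarith [hc] : x + ε ≠ x)
    (by intro hc; nlinarith [hc] : x + 2 ≠ x)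
    (by linarith : x + ε ≤ x + 2)
  simp only [Function.comp_apply] at h
  have hgx : 0 < Real.Gamma x := Real.Gamma_pos_of_pos (by linarith)
  have hg2 : Real.Gamma (x+2) = (x+1) * x * Real.Gamma x := by
    have h1 : Real.Gamma (x+1) = x * Real.Gamma x := Real.Gamma_add_one (by linarith)
    have h2 : Real.Gamma (x+1+1) = (x+1) * Real.Gamma (x+1) :=
      Real.Gamma_add_one (by linarith)
    rw [show x + 2 = x + 1 + 1 by ring, h2, h1]; ring
  have hnum : Real.log (Real.Gamma (x+2)) - Real.log (Real.Gamma x) = Real.log (x*(x+1)) := by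
    rw [hg2, Real.log_mul (by positivity) hgx.ne', Real.log_mul (by linarith) (by linarith),
      Real.log_mul (by linarith) (by linarith)]
    ring
  rw [show x + ε - x = ε by ring, show x + 2 - x = 2 by ring, hnum] at h
  have := (div_le_div_iff₀ hε (by norm_num : (0:ℝ) < 2)).1 h
  nlinarith [this]

set_option maxHeartbeats 1000000 in
/-- There are absolute constants `C₁, C₂ > 0` such that for every `n ≥ 1`
and every `β ≥ −1/2`:
`(1/2)·(1 − C₁/(n+2β+3)) ≤ A_{n,β}/ω_n ≤ (1/2)·(1 + C₂·ln((n+1)(n+2β+2))/(n+2β+1))`. -/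
theorem Aconst_div_omega_bounds :
    ∃ C₁ : ℝ, 0 < C₁ ∧ ∃ C₂ : ℝ, 0 < C₂ ∧ ∀ n : ℕ, 1 ≤ n → ∀ β : ℝ, -1 / 2 ≤ β →
      (1 / 2) * (1 - C₁ / ((n : ℝ) + 2 * β + 3)) ≤ Aconst n β / omegaN n ∧
        Aconst n β / omegaN n ≤
          (1 / 2) * (1 + C₂ * Real.log (((n : ℝ) + 1) * ((n : ℝ) + 2 * β + 2)) /
            ((n : ℝ) + 2 * β + 1)) := by
  refine ⟨2, by norm_num, 8 * Real.exp 11, by positivity, ?_⟩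
  intro n hn β hβ
  have hn1 : (1:ℝ) ≤ (n:ℝ) := by exact_mod_cast hn
  set t : ℝ := (n:ℝ) + 2 * β + 1 with ht_def
  set x : ℝ := (n:ℝ) + 1 with hx_def
  clear_value t x
  have ht1 : 1 ≤ t := by rw [ht_def]; linarith
  have htpos : 0 < t := by linarith
  have hnt : (n:ℝ) ≤ t := by rw [ht_def]; linarith
  have hx2 : 2 ≤ x := by rw [hx_def]; linarith
  have hxt : x ≤ t + 1 := by rw [hx_def]; linarith
  have e1 : (n:ℝ) + 2 * β + 1 = t := ht_def.symm
  have e2 : (n:ℝ) + 2 * β + 2 = t + 1 := by rw [← e1]; ring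
  have e3 : (n:ℝ) + 2 * β + 3 = t + 2 := by rw [← e1]; ring
  have hεpos : (0:ℝ) < 2 / t := by positivity
  have hε2 : (2:ℝ) / t ≤ 2 := by
    rw [div_le_iff₀ htpos]; nlinarith
  -- Gamma positivity
  have hGt2 : 0 < Real.Gamma (t/2) := Real.Gamma_pos_of_pos (by linarith)
  have hGt12 : 0 < Real.Gamma ((t+1)/2) := Real.Gamma_pos_of_pos (by linarith)
  have hGx : 0 < Real.Gamma x := Real.Gamma_pos_of_pos (by linarith)
  have hGxε : 0 < Real.Gamma (x + 2/t) := Real.Gamma_pos_of_pos (by positivity)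
  have hsπ : 0 < Real.sqrt Real.pi := Real.sqrt_pos.2 Real.pi_pos
  have hsπ1 : 1 ≤ Real.sqrt Real.pi := Real.one_le_sqrt.2 (by linarith [Real.pi_gt_three])
  have hsπ2 : Real.sqrt Real.pi ≤ 2 := by
    rw [show (2:ℝ) = Real.sqrt 4 by
      rw [show (4:ℝ) = 2^2 by norm_num, Real.sqrt_sq (by norm_num : (0:ℝ) ≤ 2)]]
    exact Real.sqrt_le_sqrt Real.pi_le_four
  -- dConst formula
  have hd : dConst n β = t * (Real.sqrt Real.pi * Real.Gamma (t/2)) / Real.Gamma ((t+1)/2) := by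
    rw [dConst, betaConst]
    rw [show ((1:ℕ):ℝ)/2 + (β + ((n:ℝ)-1)/2) + 1 = (t+1)/2 by rw [ht_def]; push_cast; ring]
    rw [show (β + ((n:ℝ)-1)/2) + 1 = t/2 by rw [ht_def]; push_cast; ring]
    rw [show Real.pi ^ (((1:ℕ):ℝ)/2) = Real.sqrt Real.pi by
      rw [Nat.cast_one, ← Real.sqrt_eq_rpow]]
    rw [← e1, div_div_eq_mul_div]
  have hkey1 : Real.Gamma ((t+1)/2) ≤ Real.Gamma (t/2) * Real.sqrt (t/2) := by
    have h := gamma_add_half_le (show (0:ℝ) < t/2 by linarith)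
    rw [show t/2 + 1/2 = (t+1)/2 by ring] at h; exact h
  have hkey2 : t/2 * Real.Gamma (t/2) ≤ Real.Gamma ((t+1)/2) * Real.sqrt ((t+1)/2) := by
    have h := gamma_add_half_le (show (0:ℝ) < (t+1)/2 by linarith)
    rw [show (t+1)/2 + 1/2 = t/2 + 1 by ring,
      Real.Gamma_add_one (show t/2 ≠ 0 by positivity)] at h
    exact h
  -- d bounds
  have hst : Real.sqrt (t/2) ≤ t :=
    le_trans (Real.sqrt_le_sqrt (by linarith)) (sqrt_le_of_one_le ht1)
  have hst1 : Real.sqrt ((t+1)/2) ≤ t + 1 :=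
    le_trans (Real.sqrt_le_sqrt (by linarith)) (sqrt_le_of_one_le (by linarith))
  have hd1 : 1 ≤ dConst n β := by
    rw [hd, le_div_iff₀ hGt12, one_mul]
    calc Real.Gamma ((t+1)/2) ≤ Real.Gamma (t/2) * Real.sqrt (t/2) := hkey1
      _ ≤ Real.Gamma (t/2) * t := by nlinarith
      _ ≤ t * (Real.sqrt Real.pi * Real.Gamma (t/2)) := by
          nlinarith [mul_nonneg (mul_nonneg (sub_nonneg.2 hsπ1) htpos.le) hGt2.le]
  have hd4 : dConst n β ≤ 4 * (t + 1) := by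
    rw [hd, div_le_iff₀ hGt12]
    have h0 : 0 ≤ Real.sqrt ((t+1)/2) := Real.sqrt_nonneg _
    calc t * (Real.sqrt Real.pi * Real.Gamma (t/2))
        = Real.sqrt Real.pi * (2 * (t/2 * Real.Gamma (t/2))) := by ring
      _ ≤ Real.sqrt Real.pi * (2 * (Real.Gamma ((t+1)/2) * Real.sqrt ((t+1)/2))) :=
          mul_le_mul_of_nonneg_left (by linarith) hsπ.le
      _ ≤ 2 * (2 * (Real.Gamma ((t+1)/2) * Real.sqrt ((t+1)/2))) :=
          mul_le_mul_of_nonneg_right hsπ2 (by nlinarith [mul_nonneg hGt12.le h0])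
      _ ≤ 2 * (2 * (Real.Gamma ((t+1)/2) * (t+1))) := by nlinarith [hGt12]
      _ = 4 * (t+1) * Real.Gamma ((t+1)/2) := by ring
  -- omega positivity
  have hω : 0 < omegaN n := by
    rw [omegaN]
    have h1 : 0 < (volume (closedBall (0 : EuclideanSpace ℝ (Fin n)) 1)).toReal :=
      ENNReal.toReal_pos (measure_closedBall_pos _ _ one_pos).ne'
        measure_closedBall_lt_top.ne
    exact mul_pos (by linarith) h1
  -- the ratio
  have hAdef : Aconst n β = omegaN n *
      (1/2 * (t/(t+2)) * (Real.Gamma (x + 2/t) / Real.Gamma x) *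
        dConst n β ^ ((2:ℝ)/t)) := by
    rw [Aconst, e1, e3, ← hx_def]
    ring
  have hA : Aconst n β / omegaN n =
      1/2 * (t/(t+2)) * (Real.Gamma (x + 2/t) / Real.Gamma x) *
        dConst n β ^ ((2:ℝ)/t) := by
    rw [hAdef, mul_comm, mul_div_assoc, div_self hω.ne', mul_one]
  set R : ℝ := Real.Gamma (x + 2/t) / Real.Gamma x with hR_def
  set S : ℝ := dConst n β ^ ((2:ℝ)/t) with hS_def
  clear_value R S
  have hR1 : 1 ≤ R := by
    rw [hR_def]; exact (one_le_div hGx).2 (gamma_le_gamma_add hx2 hεpos)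
  have hS1 : 1 ≤ S := by
    rw [hS_def]
    calc (1:ℝ) = 1 ^ ((2:ℝ)/t) := (Real.one_rpow _).symm
      _ ≤ _ := Real.rpow_le_rpow (by norm_num) hd1 (by positivity)
  have hP0 : (0:ℝ) < t/(t+2) := by positivity
  have hP1 : t/(t+2) ≤ 1 := by rw [div_le_one (by linarith)]; linarith
  constructor
  · -- lower bound
    rw [hA, e3]
    have heq : 1 - 2/(t+2) = t/(t+2) := by field_simp; ring
    rw [heq]
    have hRS : 1 ≤ R * S := by
      calc (1:ℝ) = 1 * 1 := by norm_num
        _ ≤ R * S := mul_le_mul hR1 hS1 (by norm_num) (by linarith)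
    calc 1/2 * (t/(t+2)) = 1/2 * (t/(t+2)) * 1 := by ring
      _ ≤ 1/2 * (t/(t+2)) * (R * S) :=
          mul_le_mul_of_nonneg_left hRS (by positivity)
      _ = 1/2 * (t/(t+2)) * R * S := by ring
  · -- upper bound
    rw [hA, e2]
    -- log facts
    have hlx0 : 0 < Real.log x := Real.log_pos (by linarith)
    have hlt0 : 0 < Real.log (t+1) := Real.log_pos (by linarith)
    have hl2x : Real.log 2 ≤ Real.log x := Real.log_le_log (by norm_num) hx2
    have hl2t : Real.log 2 ≤ Real.log (t+1) := Real.log_le_log (by norm_num) (by linarith)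
    have hlxt : Real.log x ≤ Real.log (t+1) := Real.log_le_log (by linarith) hxt
    have hlt1 : Real.log (t+1) ≤ t := by
      have := Real.log_le_sub_one_of_pos (show (0:ℝ) < t+1 by linarith); linarith
    have hlx1 : Real.log (x+1) ≤ 2 * Real.log x := by
      have h1 : Real.log (x+1) ≤ Real.log (x^2) :=
        Real.log_le_log (by linarith) (by nlinarith)
      rw [Real.log_pow] at h1; push_cast at h1; linarith
    have hlx1t : Real.log (x+1) ≤ Real.log (t+2) := Real.log_le_log (by linarith) (by linarith)
    have hlt2 : Real.log (t+2) ≤ t + 1 := by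
      have := Real.log_le_sub_one_of_pos (show (0:ℝ) < t+2 by linarith); linarith
    have hl4 : Real.log 4 = 2 * Real.log 2 := by
      rw [show (4:ℝ) = 2^2 by norm_num, Real.log_pow]; push_cast; ring
    have hl2 : Real.log 2 ≤ 1 := by
      have := Real.log_le_sub_one_of_pos (show (0:ℝ) < 2 by norm_num); linarith
    have hl20 : 0 < Real.log 2 := Real.log_pos (by norm_num)
    set M : ℝ := Real.log (x*(x+1)) + 2 * Real.log (4*(t+1)) with hM_def
    clear_value M
    have hMsplit : M = Real.log x + Real.log (x+1) +
        2 * (Real.log 4 + Real.log (t+1)) := by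
      rw [hM_def, Real.log_mul (by linarith) (by linarith),
        Real.log_mul (by norm_num) (by linarith)]
    have hlx10 : 0 ≤ Real.log (x+1) := Real.log_nonneg (by linarith)
    have hM0 : 0 ≤ M := by rw [hMsplit]; linarith
    have hM11 : M ≤ 11 * t := by rw [hMsplit]; linarith
    have hM8 : M ≤ 8 * (Real.log x + Real.log (t+1)) := by
      rw [hMsplit, hl4]; linarith
    -- R and S upper bounds
    have hRup : R ≤ Real.exp (Real.log (x*(x+1)) / t) := by
      have h := log_gamma_add_le hx2 hεpos hε2
      rw [hR_def, div_le_iff₀ hGx]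
      calc Real.Gamma (x + 2/t) = Real.exp (Real.log (Real.Gamma (x + 2/t))) :=
            (Real.exp_log hGxε).symm
        _ ≤ Real.exp (Real.log (Real.Gamma x) + (2/t/2) * Real.log (x*(x+1))) :=
            Real.exp_le_exp.2 h
        _ = Real.exp (Real.log (x*(x+1)) / t) * Real.Gamma x := by
            rw [show Real.log (Real.Gamma x) + (2/t/2) * Real.log (x*(x+1))
              = Real.log (x*(x+1)) / t + Real.log (Real.Gamma x) by field_simp; ring,
              Real.exp_add, Real.exp_log hGx]
    have hSup : S ≤ Real.exp (2 * Real.log (4*(t+1)) / t) := by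
      rw [hS_def]
      calc dConst n β ^ ((2:ℝ)/t) ≤ (4*(t+1)) ^ ((2:ℝ)/t) :=
            Real.rpow_le_rpow (by linarith) hd4 (by positivity)
        _ = Real.exp (Real.log (4*(t+1)) * (2/t)) :=
            Real.rpow_def_of_pos (by linarith) _
        _ = Real.exp (2 * Real.log (4*(t+1)) / t) := by ring_nf
    have hRS : R * S ≤ Real.exp (M/t) := by
      calc R * S ≤ Real.exp (Real.log (x*(x+1)) / t) * Real.exp (2 * Real.log (4*(t+1)) / t) :=
            mul_le_mul hRup hSup (by linarith) (Real.exp_pos _).le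
        _ = Real.exp (M/t) := by rw [← Real.exp_add, hM_def]; congr 1; field_simp
    -- exp bound
    have hv0 : 0 ≤ M/t := div_nonneg hM0 htpos.le
    have hv11 : M/t ≤ 11 := by rw [div_le_iff₀ htpos]; linarith
    have hexp1 : Real.exp (M/t) ≤ 1 + (M/t) * Real.exp (M/t) := by
      have h3 := mul_le_mul_of_nonneg_right (Real.add_one_le_exp (-(M/t)))
        (Real.exp_pos (M/t)).le
      rw [← Real.exp_add] at h3
      simp only [neg_add_cancel, Real.exp_zero] at h3
      linarith only [h3]
    have hexp2 : (M/t) * Real.exp (M/t) ≤ (M/t) * Real.exp 11 :=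
      mul_le_mul_of_nonneg_left (Real.exp_le_exp.2 hv11) hv0
    have hMt : M/t ≤ 8 * (Real.log x + Real.log (t+1)) / t := by
      gcongr
    have hfin : Real.exp (M/t) ≤
        1 + 8 * Real.exp 11 * (Real.log x + Real.log (t+1)) / t := by
      have h5 : (M/t) * Real.exp 11 ≤
          8 * (Real.log x + Real.log (t+1)) / t * Real.exp 11 :=
        mul_le_mul_of_nonneg_right hMt (Real.exp_pos 11).le
      have : 8 * (Real.log x + Real.log (t+1)) / t * Real.exp 11 =
          8 * Real.exp 11 * (Real.log x + Real.log (t+1)) / t := by ring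
      linarith [this ▸ h5]
    have hL : Real.log (x * (t+1)) = Real.log x + Real.log (t+1) :=
      Real.log_mul (by linarith) (by linarith)
    rw [hL]
    have hRSfin : R * S ≤ 1 + 8 * Real.exp 11 * (Real.log x + Real.log (t+1)) / t :=
      le_trans hRS hfin
    have hRS0 : 0 ≤ R * S := by positivity
    calc 1/2 * (t/(t+2)) * R * S = 1/2 * ((t/(t+2)) * (R * S)) := by ring
      _ ≤ 1/2 * (R * S) := by
          have h6 := mul_le_of_le_one_left hRS0 hP1
          linarith
      _ ≤ 1/2 * (1 + 8 * Real.exp 11 * (Real.log x + Real.log (t+1)) / t) := by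
          linarith
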